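/- Let q₁ ∈ ℝ, β₁ > 0 and δ > 0. Then there exists a uniquely determined pair (q₂, β₂) with β₂ > 0 such that (e_{q₁}^{−β₁x²})^δ = e_{q₂}^{−β₂x²} for all x ∈ ℝ; moreover q₂ = (δ − 1 + q₁)/δ and β₂ = δβ₁. -/

import Mathlib

open MeasureTheory Filter Real Topology

/-- The `q`-exponential `e_q^x = [1 + (1-q)x]_+^{1/(1-q)}` (with `e_1^x = e^x`). -/
noncomputable def qExp (q x : ℝ) : ℝ :=
  if q = 1 then Real.exp x else (max (1 + (1 - q) * x) 0) ^ (1 / (1 - q))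

/-- The `q`-exponential of a complex argument, via the principal power. -/
noncomputable def qExpC (q : ℝ) (w : ℂ) : ℂ :=
  if q = 1 then Complex.exp w else (1 + (1 - (q : ℂ)) * w) ^ ((1 : ℂ) / (1 - (q : ℂ)))

/-- The `q`-product on complex numbers, via principal powers. -/
noncomputable def qProdC (q : ℝ) (x y : ℂ) : ℂ :=
  if q = 1 then x * y
  else (x ^ ((1 : ℂ) - (q : ℂ)) + y ^ ((1 : ℂ) - (q : ℂ)) - 1) ^ ((1 : ℂ) / (1 - (q : ℂ)))

/-- The normalizing constant `C_q = ∫ e_q^{-x²} dx`. -/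
noncomputable def qC (q : ℝ) : ℝ := ∫ x : ℝ, qExp q (-x ^ 2)

/-- The `q`-Gaussian `G_q(β; x) = (√β / C_q) e_q^{-βx²}`. -/
noncomputable def qGaussian (q β x : ℝ) : ℝ := (Real.sqrt β / qC q) * qExp q (-(β * x ^ 2))

/-- The `q`-Fourier transform `F_q[f](ξ) = ∫ f(x) e_q^{i x ξ f(x)^{q-1}} dx`. -/
noncomputable def qFourier (q : ℝ) (f : ℝ → ℝ) (ξ : ℝ) : ℂ :=
  ∫ x : ℝ, (f x : ℂ) * qExpC q (Complex.I * (x : ℂ) * (ξ : ℂ) * ((f x ^ (q - 1) : ℝ) : ℂ))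

/-- The `q`-mean `μ_q(f) = ∫ x f(x)^q dx / ∫ f(x)^q dx`. -/
noncomputable def qMean (q : ℝ) (f : ℝ → ℝ) : ℝ :=
  (∫ x : ℝ, x * f x ^ q) / (∫ x : ℝ, f x ^ q)

/-- The `q`-variance `σ_q²(f) = ∫ (x-μ_q(f))² f(x)^q dx / ∫ f(x)^q dx`. -/
noncomputable def qVar (q : ℝ) (f : ℝ → ℝ) : ℝ :=
  (∫ x : ℝ, (x - qMean q f) ^ 2 * f x ^ q) / (∫ x : ℝ, f x ^ q)

/-- Iterated `q`-product `w ⊗_q ⋯ ⊗_q w` (`N` factors). -/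
noncomputable def qProdPow (q : ℝ) (w : ℂ) : ℕ → ℂ
  | 0 => 1
  | 1 => w
  | n + 2 => qProdC q w (qProdPow q w (n + 1))

/-- `z(s) = (1+s)/(3-s)`. -/
noncomputable def zmap (s : ℝ) : ℝ := (1 + s) / (3 - s)

/-- The inverse of `z`: `z⁻¹(t) = (3t-1)/(1+t)`. -/
noncomputable def zinvmap (t : ℝ) : ℝ := (3 * t - 1) / (1 + t)

lemma qExp_of_ne {q : ℝ} (hq : q ≠ 1) (x : ℝ) :
    qExp q x = (max (1 + (1 - q) * x) 0) ^ (1 / (1 - q)) := by simp [qExp, hq]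

lemma qExp_one (x : ℝ) : qExp 1 x = Real.exp x := by simp [qExp]

/-- mixing `exp` with a `b ≠ 1` q-exponential is impossible -/
lemma no_mix_exp (b α γ : ℝ) (hα : 0 < α) (hγ : 0 < γ) (hb : b ≠ 1)
    (h : ∀ x : ℝ, Real.exp (-(α * x ^ 2)) = qExp b (-(γ * x ^ 2))) : False := by
  have hb1 : 1 - b ≠ 0 := sub_ne_zero.mpr (Ne.symm hb)
  rcases hb.lt_or_gt with hblt | hbgt
  · -- b > 1 case? no: hblt : b < 1
    have hc : 0 < (1 - b) * γ := mul_pos (by linarith) hγ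
    set x := Real.sqrt ((1 - b) * γ)⁻¹ with hx
    have hx2 : x ^ 2 = ((1 - b) * γ)⁻¹ := Real.sq_sqrt (by positivity)
    have := h x
    rw [qExp_of_ne hb] at this
    have hbase : 1 + (1 - b) * -(γ * x ^ 2) = 0 := by
      rw [hx2]; field_simp; norm_num
    rw [hbase] at this
    simp only [max_self] at this
    rw [Real.zero_rpow (by simp [hb1])] at this
    exact (Real.exp_pos _).ne' this
  · -- b > 1 : polynomial contradiction
    have hc : 0 < (b - 1) * γ := mul_pos (by linarith) hγ
    set c := (b - 1) * γ with hcdef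
    have key : ∀ x : ℝ, -(α * x ^ 2) = (1 / (1 - b)) * Real.log (1 + c * x ^ 2) := by
      intro x
      have hpos : 0 < 1 + c * x ^ 2 := by positivity
      have := h x
      rw [qExp_of_ne hb] at this
      have hbase : 1 + (1 - b) * -(γ * x ^ 2) = 1 + c * x ^ 2 := by ring
      rw [hbase, max_eq_left hpos.le] at this
      have := congrArg Real.log this
      rwa [Real.log_exp, Real.log_rpow hpos] at this
    have h1 := key 1
    have h2 := key 2
    have e1 : 0 < 1 + c * (1:ℝ) ^ 2 := by positivity
    have e2 : 0 < 1 + c * (2:ℝ) ^ 2 := by positivity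
    have hlog : Real.log (1 + c * (2:ℝ) ^ 2) = 4 * Real.log (1 + c * (1:ℝ) ^ 2) := by
      have h1b : 1 / (1 - b) ≠ 0 := by simp [hb1]
      field_simp at h1 h2 ⊢
      nlinarith [h1, h2]
    have : (1 + c * (2:ℝ) ^ 2) = (1 + c * (1:ℝ) ^ 2) ^ (4:ℕ) := by
      have := congrArg Real.exp hlog
      rw [Real.exp_log e2] at this
      rw [this]
      rw [show (4:ℝ) * Real.log (1 + c * (1:ℝ)^2) = Real.log ((1 + c * (1:ℝ)^2) ^ (4:ℕ)) by
        rw [Real.log_pow]; push_cast; ring]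
      rw [Real.exp_log (by positivity)]
    have hpos : 0 < 6*c^2 + 4*c^3 + c^4 := by positivity
    nlinarith [this, hpos]

/-- mixing a compact-support (`a < 1`) with an everywhere-positive (`b > 1`) is impossible -/
lemma no_mix_supp (a b α γ : ℝ) (hα : 0 < α) (hγ : 0 < γ) (ha : a < 1) (hb : 1 < b)
    (h : ∀ x : ℝ, qExp a (-(α * x ^ 2)) = qExp b (-(γ * x ^ 2))) : False := by
  have ha1 : 1 - a ≠ 0 := by linarith
  have hb1 : 1 - b ≠ 0 := by linarith
  have hca : 0 < (1 - a) * α := mul_pos (by linarith) hα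
  set x := Real.sqrt ((1 - a) * α)⁻¹ with hx
  have hx2 : x ^ 2 = ((1 - a) * α)⁻¹ := Real.sq_sqrt (by positivity)
  have := h x
  rw [qExp_of_ne (by linarith : a ≠ 1), qExp_of_ne (by linarith : b ≠ 1)] at this
  have hbaseA : 1 + (1 - a) * -(α * x ^ 2) = 0 := by rw [hx2]; field_simp; norm_num
  have hbaseB : 0 < 1 + (1 - b) * -(γ * x ^ 2) := by
    nlinarith [mul_nonneg (by linarith : (0:ℝ) ≤ b - 1) (by positivity : (0:ℝ) ≤ γ * x ^ 2)]
  rw [hbaseA] at this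
  simp only [max_self] at this
  rw [Real.zero_rpow (by simp [ha1]), max_eq_left hbaseB.le] at this
  exact (Real.rpow_pos_of_pos hbaseB _).ne' this.symm

/-- injectivity of `(q, β) ↦ (x ↦ e_q^{-βx²})` -/
lemma qexp_inj (a b α γ : ℝ) (hα : 0 < α) (hγ : 0 < γ)
    (h : ∀ x : ℝ, qExp a (-(α * x ^ 2)) = qExp b (-(γ * x ^ 2))) : a = b ∧ α = γ := by
  by_cases ha : a = 1 <;> by_cases hb : b = 1
  · subst ha; subst hb
    refine ⟨rfl, ?_⟩
    have := h 1
    rw [qExp_one, qExp_one] at this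
    have := Real.exp_injective this
    nlinarith [this]
  · exfalso; subst ha
    exact no_mix_exp b α γ hα hγ hb (fun x => by rw [← qExp_one]; exact h x)
  · exfalso; subst hb
    exact no_mix_exp a γ α hγ hα ha (fun x => by rw [← qExp_one]; exact (h x).symm)
  · have ha1 : 1 - a ≠ 0 := sub_ne_zero.mpr (Ne.symm ha)
    have hb1 : 1 - b ≠ 0 := sub_ne_zero.mpr (Ne.symm hb)
    rcases lt_or_gt_of_ne ha with halt | hagt <;> rcases lt_or_gt_of_ne hb with hblt | hbgt
    · -- a < 1, b < 1
      have hca : 0 < (1 - a) * α := mul_pos (by linarith) hα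
      have hcb : 0 < (1 - b) * γ := mul_pos (by linarith) hγ
      have hceq : (1 - a) * α = (1 - b) * γ := by
        rcases lt_trichotomy ((1 - a) * α) ((1 - b) * γ) with hlt | heq | hgt
        · exfalso
          set x := Real.sqrt ((1 - b) * γ)⁻¹ with hx
          have hx2 : x ^ 2 = ((1 - b) * γ)⁻¹ := Real.sq_sqrt (by positivity)
          have := h x
          rw [qExp_of_ne ha, qExp_of_ne hb] at this
          have hbB : 1 + (1 - b) * -(γ * x ^ 2) = 0 := by rw [hx2]; field_simp; norm_num
          have hbA : 0 < 1 + (1 - a) * -(α * x ^ 2) := by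
            rw [hx2]
            have : (1 - a) * α * ((1 - b) * γ)⁻¹ < 1 := by
              rw [mul_inv_lt_iff₀ hcb]; linarith
            nlinarith
          rw [hbB] at this
          simp only [max_self] at this
          rw [Real.zero_rpow (by simp [hb1]), max_eq_left hbA.le] at this
          exact (Real.rpow_pos_of_pos hbA _).ne' this
        · exact heq
        · exfalso
          set x := Real.sqrt ((1 - a) * α)⁻¹ with hx
          have hx2 : x ^ 2 = ((1 - a) * α)⁻¹ := Real.sq_sqrt (by positivity)
          have := h x
          rw [qExp_of_ne ha, qExp_of_ne hb] at this
          have hbA : 1 + (1 - a) * -(α * x ^ 2) = 0 := by rw [hx2]; field_simp; norm_num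
          have hbB : 0 < 1 + (1 - b) * -(γ * x ^ 2) := by
            rw [hx2]
            have : (1 - b) * γ * ((1 - a) * α)⁻¹ < 1 := by
              rw [mul_inv_lt_iff₀ hca]; linarith
            nlinarith
          rw [hbA] at this
          simp only [max_self] at this
          rw [Real.zero_rpow (by simp [ha1]), max_eq_left hbB.le] at this
          exact (Real.rpow_pos_of_pos hbB _).ne' this.symm
      -- now same exponent base at half-support point
      have hab : a = b := by
        set x := Real.sqrt (2 * ((1 - a) * α))⁻¹ with hx
        have hx2 : x ^ 2 = (2 * ((1 - a) * α))⁻¹ := Real.sq_sqrt (by positivity)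
        have := h x
        rw [qExp_of_ne ha, qExp_of_ne hb] at this
        have hbA : 1 + (1 - a) * -(α * x ^ 2) = 1/2 := by rw [hx2]; field_simp; ring
        have hbB : 1 + (1 - b) * -(γ * x ^ 2) = 1/2 := by
          rw [hx2]
          have hrw : (1 - b) * -(γ * (2 * ((1 - a) * α))⁻¹) =
              -((1 - b) * γ * (2 * ((1 - a) * α))⁻¹) := by ring
          rw [hrw, ← hceq]
          have hne : (1 - a) * α ≠ 0 := hca.ne'
          field_simp
          ring
        rw [hbA, hbB, max_eq_left (by norm_num)] at this
        have := congrArg Real.log this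
        rw [Real.log_rpow (by norm_num), Real.log_rpow (by norm_num)] at this
        have hl : Real.log (1/2 : ℝ) ≠ 0 := by
          simp only [ne_eq, Real.log_eq_zero]; push_neg; norm_num
        have : (1:ℝ) / (1 - a) = 1 / (1 - b) := mul_right_cancel₀ hl this
        field_simp at this
        linarith
      subst hab
      exact ⟨rfl, mul_left_cancel₀ ha1 hceq⟩
    · exact (no_mix_supp a b α γ hα hγ halt hbgt h).elim
    · exact (no_mix_supp b a γ α hγ hα hblt hagt (fun x => (h x).symm)).elim
    · -- a > 1, b > 1 : convexity argument
      have hc : 0 < (a - 1) * α := mul_pos (by linarith) hα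
      have hc' : 0 < (b - 1) * γ := mul_pos (by linarith) hγ
      set c := (a - 1) * α with hcdef
      set c' := (b - 1) * γ with hc'def
      set r := (1 - a) / (1 - b) with hrdef
      have hr : 0 < r := div_pos_iff.mpr (Or.inr ⟨by linarith, by linarith⟩)
      have key : ∀ u : ℝ, 0 ≤ u → 1 + c * u = (1 + c' * u) ^ r := by
        intro u hu
        have hx2 : (Real.sqrt u) ^ 2 = u := Real.sq_sqrt hu
        have := h (Real.sqrt u)
        rw [qExp_of_ne ha, qExp_of_ne hb, hx2] at this
        have hpA : 0 < 1 + c * u := by positivity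
        have hpB : 0 < 1 + c' * u := by positivity
        have hbA : 1 + (1 - a) * -(α * u) = 1 + c * u := by ring
        have hbB : 1 + (1 - b) * -(γ * u) = 1 + c' * u := by ring
        rw [hbA, hbB, max_eq_left hpA.le, max_eq_left hpB.le] at this
        have := congrArg (fun t : ℝ => t ^ (1 - a)) this
        rw [← Real.rpow_mul hpA.le, ← Real.rpow_mul hpB.le, one_div_mul_cancel ha1,
          Real.rpow_one] at this
        rw [this, hrdef]
        congr 1
        ring
      have hr1 : r = 1 := by
        have k1 := key 1 zero_le_one
        have k2 := key 2 (by norm_num)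
        have m1 : (1:ℝ) ∈ Set.Ici (0:ℝ) := by norm_num
        have m2 : (1 + 2 * c' : ℝ) ∈ Set.Ici (0:ℝ) := by
          simp only [Set.mem_Ici]; nlinarith
        have hne : (1:ℝ) ≠ 1 + 2 * c' := by nlinarith
        have hcomb : (1/2 : ℝ) • (1:ℝ) + (1/2 : ℝ) • (1 + 2 * c' : ℝ) = 1 + c' := by
          simp [smul_eq_mul]; ring
        rcases lt_trichotomy r 1 with hlt | heq | hgt
        · exfalso
          have := (Real.strictConcaveOn_rpow hr hlt).2 m1 m2 hne (by norm_num : (0:ℝ) < 1/2)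
            (by norm_num : (0:ℝ) < 1/2) (by norm_num)
          rw [hcomb] at this
          simp only [smul_eq_mul, Real.one_rpow] at this
          rw [show (1 + c' * 1 : ℝ) = 1 + c' by ring] at k1
          rw [show (1 + c' * 2 : ℝ) = 1 + 2 * c' by ring] at k2
          rw [← k1, ← k2] at this
          nlinarith
        · exact heq
        · exfalso
          have := (strictConvexOn_rpow hgt).2 m1 m2 hne (by norm_num : (0:ℝ) < 1/2)
            (by norm_num : (0:ℝ) < 1/2) (by norm_num)
          rw [hcomb] at this
          simp only [smul_eq_mul, Real.one_rpow] at this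
          rw [show (1 + c' * 1 : ℝ) = 1 + c' by ring] at k1
          rw [show (1 + c' * 2 : ℝ) = 1 + 2 * c' by ring] at k2
          rw [← k1, ← k2] at this
          nlinarith
      have hcc : c = c' := by
        have := key 1 zero_le_one
        rw [hr1, Real.rpow_one] at this
        linarith
      have hab : a = b := by
        rw [hrdef] at hr1
        field_simp at hr1
        linarith
      subst hab
      refine ⟨rfl, ?_⟩
      rw [hcdef, hc'def] at hcc
      exact mul_left_cancel₀ (by linarith : (a:ℝ) - 1 ≠ 0) hcc

lemma canon (q₁ β₁ δ : ℝ) (hβ₁ : 0 < β₁) (hδ : 0 < δ) :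
    ∀ x : ℝ, qExp q₁ (-(β₁ * x ^ 2)) ^ δ = qExp ((δ - 1 + q₁) / δ) (-(δ * β₁ * x ^ 2)) := by
  intro x
  by_cases hq : q₁ = 1
  · subst hq
    have hqc : (δ - 1 + 1) / δ = 1 := by field_simp; ring
    rw [hqc, qExp_one, qExp_one]
    rw [← Real.exp_log (Real.rpow_pos_of_pos (Real.exp_pos _) δ)]
    rw [Real.log_rpow (Real.exp_pos _), Real.log_exp]
    ring_nf
  · have hδ0 : δ ≠ 0 := hδ.ne'
    have hq1 : 1 - q₁ ≠ 0 := sub_ne_zero.mpr (Ne.symm hq)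
    have hqc : (δ - 1 + q₁) / δ ≠ 1 := by
      intro hcon
      rw [div_eq_one_iff_eq hδ0] at hcon
      exact hq (by linarith)
    rw [qExp_of_ne hq, qExp_of_ne hqc]
    have h1 : 1 - (δ - 1 + q₁) / δ = (1 - q₁) / δ := by field_simp; ring
    rw [h1]
    have hbase : 1 + (1 - q₁) / δ * -(δ * β₁ * x ^ 2) = 1 + (1 - q₁) * -(β₁ * x ^ 2) := by
      field_simp
    rw [hbase]
    rw [← Real.rpow_mul (le_max_right _ 0)]
    congr 1
    rw [one_div_div]
    field_simp


/-- Lemma 1: for any real `q₁`, `β₁ > 0`, `δ > 0` there is a uniquely determined pair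
`(q₂, β₂)` with `β₂ > 0` such that `(e_{q₁}^{-β₁x²})^δ = e_{q₂}^{-β₂x²}` for all `x`;
moreover `q₂ = (δ - 1 + q₁)/δ` and `β₂ = δβ₁`. -/
theorem qExp_pow_eq_qExp_unique (q₁ β₁ δ : ℝ) (hβ₁ : 0 < β₁) (hδ : 0 < δ) :
    ∀ p : ℝ × ℝ,
      (0 < p.2 ∧ ∀ x : ℝ, qExp q₁ (-(β₁ * x ^ 2)) ^ δ = qExp p.1 (-(p.2 * x ^ 2))) ↔
        p = ((δ - 1 + q₁) / δ, δ * β₁) := by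
  intro p
  constructor
  · rintro ⟨hp2, hpeq⟩
    have hcan := canon q₁ β₁ δ hβ₁ hδ
    have heq : ∀ x : ℝ, qExp p.1 (-(p.2 * x ^ 2)) = qExp ((δ - 1 + q₁) / δ) (-(δ * β₁ * x ^ 2)) :=
      fun x => (hpeq x).symm.trans (hcan x)
    obtain ⟨h1, h2⟩ := qexp_inj p.1 ((δ - 1 + q₁) / δ) p.2 (δ * β₁) hp2 (mul_pos hδ hβ₁) heq
    exact Prod.ext h1 h2
  · rintro rfl
    exact ⟨mul_pos hδ hβ₁, canon q₁ β₁ δ hβ₁ hδ⟩
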